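/- Let C ∈ K[x₁,…,x_{n+1}] be homogeneous of degree m ≥ 1, let λ ∈ K with λ ≠ 0, and let 0 ≤ r ≤ m−1. Suppose f ∈ K[x₁,…,x_{n+1}] is a nonzero polynomial all of whose nonzero homogeneous components have degree congruent to r modulo m, and f ∉ (C−λ). Then there exists a homogeneous polynomial f' ∈ K[x₁,…,x_{n+1}] of degree equal to deg f (so in particular deg f' ≡ r mod m) such that f − f' ∈ (C−λ). -/

import Mathlib

open MvPolynomial

lemma top_component_ne_zero {K : Type*} [Field K] {σ : Type*}
    (f : MvPolynomial σ K) (hf0 : f ≠ 0) :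
    homogeneousComponent f.totalDegree f ≠ 0 := by
  classical
  obtain ⟨d, hd, hd2⟩ := f.support.exists_mem_eq_sup
    (MvPolynomial.support_nonempty.mpr hf0) (fun s : σ →₀ ℕ => s.sum fun _ e => e)
  intro h
  have hc : coeff d (homogeneousComponent f.totalDegree f) = coeff d f := by
    rw [coeff_homogeneousComponent, if_pos]
    exact hd2.symm
  rw [h] at hc
  exact (MvPolynomial.mem_support_iff.mp hd) hc.symm

/-- Let `C ∈ K[x₁,…,x_{n+1}]` be homogeneous of degree `m ≥ 1` and `λ ≠ 0`.
If `f ≠ 0` is `m`-homogeneous of class `r` (all nonzero homogeneous components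
of `f` have degree ≡ `r` mod `m`) and `f ∉ (C - λ)`, then there is a homogeneous
polynomial `f'` of degree `deg f` with `f - f' ∈ (C - λ)`. -/
theorem stmt10 {K : Type*} [Field K] [CharZero K] (n : ℕ)
    (Cp : MvPolynomial (Fin (n + 1)) K) (m : ℕ) (hm : 1 ≤ m)
    (hhom : Cp.IsHomogeneous m) (lam : K) (hlam : lam ≠ 0)
    (r : ℕ) (hr : r < m)
    (f : MvPolynomial (Fin (n + 1)) K) (hf0 : f ≠ 0)
    (hcomp : ∀ d : ℕ, homogeneousComponent d f ≠ 0 → d % m = r)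
    (hfI : f ∉ Ideal.span {Cp - MvPolynomial.C lam}) :
    ∃ f' : MvPolynomial (Fin (n + 1)) K, f' ≠ 0 ∧
      f'.IsHomogeneous f.totalDegree ∧
      f - f' ∈ Ideal.span {Cp - MvPolynomial.C lam} := by
  classical
  set D := f.totalDegree with hD
  set I := Ideal.span {Cp - MvPolynomial.C lam} with hI
  set g : ℕ → MvPolynomial (Fin (n + 1)) K := fun i =>
    MvPolynomial.C (lam⁻¹ ^ ((D - i) / m)) * Cp ^ ((D - i) / m) *
      homogeneousComponent i f with hg
  set f' := ∑ i ∈ Finset.range (D + 1), g i with hf'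
  have hDr : D % m = r := hcomp D (top_component_ne_zero f hf0)
  -- each difference lies in I
  have hmem : ∀ i, homogeneousComponent i f - g i ∈ I := by
    intro i
    set k := (D - i) / m with hk
    have key : homogeneousComponent i f - g i
        = MvPolynomial.C (lam⁻¹ ^ k) * ((MvPolynomial.C lam) ^ k - Cp ^ k) *
          homogeneousComponent i f := by
      have h1 : MvPolynomial.C (lam⁻¹ ^ k) * (MvPolynomial.C lam) ^ k
          = (1 : MvPolynomial (Fin (n + 1)) K) := by
        rw [← MvPolynomial.C_pow, ← MvPolynomial.C_mul]
        rw [show lam⁻¹ ^ k * lam ^ k = 1 by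
          rw [← mul_pow, inv_mul_cancel₀ hlam, one_pow]]
        exact MvPolynomial.C_1
      simp only [hg]
      linear_combination (-(homogeneousComponent i f)) * h1
    rw [key]
    obtain ⟨c, hcc⟩ := sub_dvd_pow_sub_pow Cp (MvPolynomial.C lam) k
    refine Ideal.mem_span_singleton.2
      ⟨MvPolynomial.C (lam⁻¹ ^ k) * (-c) * homogeneousComponent i f, ?_⟩
    linear_combination (-(MvPolynomial.C (lam⁻¹ ^ k)) * homogeneousComponent i f) * hcc
  have hsub : f - f' ∈ I := by
    have : f - f' = ∑ i ∈ Finset.range (D + 1), (homogeneousComponent i f - g i) := by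
      rw [Finset.sum_sub_distrib, hf', sum_homogeneousComponent]
    rw [this]
    exact Ideal.sum_mem _ fun i _ => hmem i
  have hhomf' : f'.IsHomogeneous D := by
    apply IsHomogeneous.sum
    intro i _
    by_cases h : homogeneousComponent i f = 0
    · simp only [hg, h, mul_zero]
      exact isHomogeneous_zero _ _ _
    · have hi' : i % m = r := hcomp i h
      have hiD : i ≤ D := by
        by_contra hgt
        push_neg at hgt
        exact h (homogeneousComponent_eq_zero _ _ hgt)
      have hdvd : m ∣ D - i := by
        obtain ⟨a, ha⟩ : ∃ a, D = m * a + r := ⟨D / m, by rw [← hDr]; exact (Nat.div_add_mod D m).symm⟩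
        obtain ⟨b, hb⟩ : ∃ b, i = m * b + r := ⟨i / m, by rw [← hi']; exact (Nat.div_add_mod i m).symm⟩
        refine ⟨a - b, ?_⟩
        rw [Nat.mul_sub]
        omega
      have hdeg : 0 + (D - i) / m * m + i = D := by
        rw [Nat.div_mul_cancel hdvd]
        omega
      have := ((isHomogeneous_C _ (lam⁻¹ ^ ((D - i) / m))).mul
        (hhom.pow ((D - i) / m))).mul (homogeneousComponent_isHomogeneous i f)
      rw [show 0 + m * ((D - i) / m) + i = 0 + (D - i) / m * m + i by ring] at this
      exact hdeg ▸ this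
  refine ⟨f', ?_, hhomf', hsub⟩
  intro h0
  apply hfI
  have : f - f' = f := by rw [h0, sub_zero]
  rwa [this] at hsub
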